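/- arXiv:math/0310028 — 2 statements merged into one kernel-verified Lean document; each statement's English description precedes it below -/
import Mathlib

section
/- Let S be a semiring, μ : Σ_r^* → S^{n×n} a monoid morphism, and β̃ : {b,c}^* → S^{rn×rn} the second embedding. Then there exists a nonempty word w ∈ Σ_r^+ with μ(w) = 0 if and only if there exists a nonempty word v ∈ {b,c}^+ with β̃(v) = 0. -/
open Matrix

/-- The block cyclic shift matrix `[0, I_{(r-1)n}; I_n, 0]`. -/
def cycShift (S : Type*) [Semiring S] (r n : ℕ) :
    Matrix (Fin r × Fin n) (Fin r × Fin n) S :=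
  Matrix.of fun p q => if (q.1 : ℕ) = ((p.1 : ℕ) + 1) % r ∧ p.2 = q.2 then 1 else 0

/-- The block diagonal matrix `diag(U_1, …, U_r)`. -/
def diagBlk {S : Type*} [Semiring S] {r n : ℕ}
    (U : Fin r → Matrix (Fin n) (Fin n) S) :
    Matrix (Fin r × Fin n) (Fin r × Fin n) S :=
  Matrix.of fun p q => if p.1 = q.1 then U p.1 p.2 q.2 else 0

/-- The second embedding `β̃ : {b,c}^* → S^{rn×rn}`, `b = 0 ↦` block cyclic
shift, `c = 1 ↦ diag(μ(a_1), …, μ(a_r))`. -/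
def secondEmb {S : Type*} [Semiring S] {r n : ℕ}
    (μ : FreeMonoid (Fin r) →* Matrix (Fin n) (Fin n) S) :
    FreeMonoid (Fin 2) →* Matrix (Fin r × Fin n) (Fin r × Fin n) S :=
  FreeMonoid.lift fun x =>
    if x = 0 then cycShift S r n else diagBlk fun i => μ (FreeMonoid.of i)

set_option linter.unusedSectionVars false

open Fin.NatCast Fin.CommRing

section Aux

variable {S : Type*} [Semiring S] {r n : ℕ} [NeZero r]

lemma fin_succ_val (p q : Fin r) : ((q : ℕ) = ((p : ℕ) + 1) % r) ↔ q = p + 1 := by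
  rw [Fin.ext_iff, Fin.val_add, Fin.val_one']
  conv_lhs => rw [Nat.add_mod, Nat.mod_eq_of_lt p.isLt]

lemma cycShift_eq : cycShift S r n =
    Matrix.of fun p q => if q.1 = p.1 + 1 ∧ p.2 = q.2 then (1 : S) else 0 := by
  ext p q
  simp only [cycShift, Matrix.of_apply]
  rw [if_congr (and_congr_left' (fin_succ_val p.1 q.1)) rfl rfl]

lemma cyc_mul (M : Matrix (Fin r × Fin n) (Fin r × Fin n) S) (p q : Fin r × Fin n) :
    (cycShift S r n * M) p q = M (p.1 + 1, p.2) q := by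
  rw [Matrix.mul_apply, cycShift_eq]
  rw [Fintype.sum_prod_type]
  simp [ite_and, Finset.sum_ite_eq, Finset.sum_ite_eq']

lemma mul_cyc (M : Matrix (Fin r × Fin n) (Fin r × Fin n) S) (p q : Fin r × Fin n) :
    (M * cycShift S r n) p q = M p (q.1 - 1, q.2) := by
  rw [Matrix.mul_apply, cycShift_eq]
  have key : ∀ s1 : Fin r, (q.1 = s1 + 1) ↔ (s1 = q.1 - 1) := by
    intro s1; rw [eq_comm, eq_sub_iff_add_eq, eq_comm]
  rw [Fintype.sum_prod_type]
  simp only [Matrix.of_apply, key, ite_and]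
  simp [Finset.sum_ite_eq, Finset.sum_ite_eq', eq_comm]

lemma diagBlk_mul (A B : Fin r → Matrix (Fin n) (Fin n) S) :
    diagBlk A * diagBlk B = diagBlk (fun j => A j * B j) := by
  ext ⟨p1, p2⟩ ⟨q1, q2⟩
  rw [Matrix.mul_apply, Fintype.sum_prod_type]
  simp only [diagBlk, Matrix.of_apply, Matrix.mul_apply]
  by_cases h : p1 = q1
  · subst h
    simp [Finset.sum_ite_eq, Finset.sum_ite_eq']
  · simp only [h, if_false]
    apply Finset.sum_eq_zero; intro s1 _
    by_cases h1 : p1 = s1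
    · subst h1; simp [h]
    · simp [h1]

lemma diagBlk_one : diagBlk (fun _ : Fin r => (1 : Matrix (Fin n) (Fin n) S)) = 1 := by
  ext p q
  simp only [diagBlk, Matrix.of_apply, Matrix.one_apply, Prod.ext_iff]
  by_cases h1 : p.1 = q.1 <;> by_cases h2 : p.2 = q.2 <;> simp [h1, h2]

lemma diagBlk_zero : diagBlk (fun _ : Fin r => (0 : Matrix (Fin n) (Fin n) S)) = 0 := by
  ext p q
  simp [diagBlk]

lemma cyc_mul_diagBlk (A : Fin r → Matrix (Fin n) (Fin n) S) :
    cycShift S r n * diagBlk A = diagBlk (fun j => A (j + 1)) * cycShift S r n := by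
  ext p q
  rw [cyc_mul, mul_cyc]
  simp only [diagBlk, Matrix.of_apply]
  by_cases h : p.1 + 1 = q.1
  · have h' : p.1 = q.1 - 1 := by rw [eq_sub_iff_add_eq]; exact h
    rw [if_pos h, if_pos h']
  · have h' : ¬ p.1 = q.1 - 1 := fun hc => h (by rw [hc, sub_add_cancel])
    rw [if_neg h, if_neg h']

lemma cyc_pow_mul_diagBlk (A : Fin r → Matrix (Fin n) (Fin n) S) (k : ℕ) :
    (cycShift S r n) ^ k * diagBlk A
      = diagBlk (fun j => A (j + (k : Fin r))) * (cycShift S r n) ^ k := by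
  induction k with
  | zero => simp
  | succ k ih =>
    rw [pow_succ', mul_assoc, ih, ← mul_assoc, cyc_mul_diagBlk, mul_assoc, ← pow_succ']
    have hkey : ∀ j : Fin r, j + (1 : Fin r) + (k : Fin r) = j + ((k + 1 : ℕ) : Fin r) := by
      intro j; push_cast; ring
    simp only [hkey]

lemma cyc_pow (k : ℕ) : (cycShift S r n) ^ k =
    Matrix.of fun p q => if q.1 = p.1 + (k : Fin r) ∧ p.2 = q.2 then (1 : S) else 0 := by
  induction k with
  | zero =>
    ext p q
    simp only [pow_zero, Matrix.one_apply, Matrix.of_apply, Nat.cast_zero, add_zero,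
      Prod.ext_iff, eq_comm]
  | succ k ih =>
    ext p q
    rw [pow_succ, mul_cyc, ih]
    simp only [Matrix.of_apply]
    have : (q.1 - 1 = p.1 + (k : Fin r)) ↔ (q.1 = p.1 + ((k : ℕ) + 1 : ℕ)) := by
      rw [sub_eq_iff_eq_add]
      push_cast
      constructor <;> intro h <;> [rw [h]; rw [h]] <;> ring
    rw [if_congr (and_congr_left' this) rfl rfl]

lemma cyc_pow_r : (cycShift S r n) ^ r = 1 := by
  rw [cyc_pow]
  ext p q
  simp [Matrix.one_apply, Fin.natCast_self, Prod.ext_iff, eq_comm]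

variable (μ : FreeMonoid (Fin r) →* Matrix (Fin n) (Fin n) S)

lemma secondEmb_of_zero : secondEmb μ (FreeMonoid.of 0) = cycShift S r n := by
  simp [secondEmb, FreeMonoid.lift_eval_of]

lemma secondEmb_of_one :
    secondEmb μ (FreeMonoid.of 1) = diagBlk fun i => μ (FreeMonoid.of i) := by
  simp [secondEmb, FreeMonoid.lift_eval_of]

/-- Encoding of the letter `a_i` as `b^i c b^(r-i)`. -/
def encLetter (r : ℕ) [NeZero r] (i : Fin r) : FreeMonoid (Fin 2) :=
  (FreeMonoid.of 0) ^ (i : ℕ) * FreeMonoid.of 1 * (FreeMonoid.of 0) ^ (r - (i : ℕ))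

lemma secondEmb_encLetter (i : Fin r) :
    secondEmb μ (encLetter r i) = diagBlk fun t => μ (FreeMonoid.of (t + i)) := by
  rw [encLetter, _root_.map_mul, _root_.map_mul, _root_.map_pow, _root_.map_pow, secondEmb_of_zero, secondEmb_of_one,
    cyc_pow_mul_diagBlk, mul_assoc, ← pow_add, Nat.add_sub_cancel' (le_of_lt i.isLt),
    cyc_pow_r, mul_one]
  simp [Fin.cast_val_eq_self]

lemma secondEmb_enc (w : FreeMonoid (Fin r)) :
    secondEmb μ (FreeMonoid.lift (encLetter r) w)
      = diagBlk fun t => μ (FreeMonoid.map (fun i => t + i) w) := by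
  induction w using FreeMonoid.inductionOn' with
  | one => simp only [_root_.map_one, diagBlk_one]
  | of_mul x w ih =>
    rw [_root_.map_mul, _root_.map_mul, FreeMonoid.lift_eval_of, secondEmb_encLetter, ih, diagBlk_mul]
    have key : ∀ j : Fin r,
        μ (FreeMonoid.of (j + x)) * μ ((FreeMonoid.map fun i => j + i) w)
          = μ ((FreeMonoid.map fun i => j + i) (FreeMonoid.of x * w)) := by
      intro j
      rw [_root_.map_mul (FreeMonoid.map _), FreeMonoid.map_of, _root_.map_mul]
    simp only [key]

lemma diagBlk_list_prod (l : List (Fin r → Matrix (Fin n) (Fin n) S)) :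
    (l.map diagBlk).prod = diagBlk fun t => (l.map (fun A => A t)).prod := by
  induction l with
  | nil => simp [diagBlk_one]
  | cons A l ih => simp [ih, diagBlk_mul]

lemma length_list_prod {α : Type*} (l : List (FreeMonoid α)) :
    l.prod.length = (l.map FreeMonoid.length).sum := by
  induction l with
  | nil => simp
  | cons x l ih => simp [FreeMonoid.length_mul, ih]

lemma length_pow {α : Type*} (x : FreeMonoid α) (k : ℕ) :
    (x ^ k).length = k * x.length := by
  induction k with
  | zero => simp
  | succ k ih => rw [pow_succ, FreeMonoid.length_mul, ih]; ring

lemma decomp (v : FreeMonoid (Fin 2)) :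
    ∃ (k : ℕ) (ψ : Fin r → FreeMonoid (Fin r)),
      (∀ t, (ψ t).length = v.toList.count 1) ∧
      secondEmb μ v = diagBlk (fun t => μ (ψ t)) * (cycShift S r n) ^ k := by
  induction v using FreeMonoid.inductionOn' with
  | one =>
    refine ⟨0, fun _ => 1, fun t => by simp [FreeMonoid.toList_one], ?_⟩
    simp only [_root_.map_one, pow_zero, mul_one]
    simp [diagBlk_one]
  | of_mul x v ih =>
    obtain ⟨k, ψ, hlen, hv⟩ := ih
    by_cases hx : x = 0
    · subst hx
      refine ⟨k + 1, fun t => ψ (t + 1), fun t => ?_, ?_⟩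
      · rw [hlen, FreeMonoid.toList_of_mul]
        simp [List.count_cons]
      · rw [_root_.map_mul, secondEmb_of_zero, hv, ← mul_assoc, cyc_mul_diagBlk, mul_assoc,
          ← pow_succ']
    · have hx1 : x = 1 := by omega
      subst hx1
      refine ⟨k, fun t => FreeMonoid.of t * ψ t, fun t => ?_, ?_⟩
      · rw [FreeMonoid.length_mul, hlen, FreeMonoid.toList_of_mul]
        simp [List.count_cons, FreeMonoid.length_of, add_comm]
      · rw [_root_.map_mul, secondEmb_of_one, hv, ← mul_assoc, diagBlk_mul]
        simp only [_root_.map_mul]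

end Aux

/-- Mortality reduction (Blondel–Tsitsiklis / Cassaigne–Karhumäki), over any
semiring: some nonempty word `w ∈ Σ_r^+` satisfies `μ(w) = 0` iff some nonempty
word `v ∈ {b,c}^+` satisfies `β̃(v) = 0`. -/
theorem mortality_r_to_two {S : Type*} [Semiring S] {r n : ℕ} [NeZero r] [NeZero n]
    (μ : FreeMonoid (Fin r) →* Matrix (Fin n) (Fin n) S) :
    (∃ w : FreeMonoid (Fin r), w ≠ 1 ∧ μ w = 0) ↔
    (∃ v : FreeMonoid (Fin 2), v ≠ 1 ∧ secondEmb μ v = 0) := by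
  constructor
  · rintro ⟨w, hw, hμ⟩
    set u : FreeMonoid (Fin 2) := FreeMonoid.lift (encLetter r) w with hu
    set vj : ℕ → FreeMonoid (Fin 2) :=
      fun j => (FreeMonoid.of 0) ^ j * u * (FreeMonoid.of 0) ^ (r - j) with hvj
    refine ⟨((List.range r).map vj).prod, ?_, ?_⟩
    · intro hv1
      have hlen := length_list_prod ((List.range r).map vj)
      rw [hv1] at hlen
      have hmem : (vj 0).length ∈ ((List.range r).map vj).map FreeMonoid.length :=
        List.mem_map.2 ⟨vj 0, List.mem_map.2
          ⟨0, List.mem_range.2 (Nat.pos_of_ne_zero (NeZero.ne r)), rfl⟩, rfl⟩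
      have hz : (vj 0).length = 0 :=
        List.sum_eq_zero_iff.1 (by simpa using hlen.symm) _ hmem
      rw [hvj] at hz
      simp only [pow_zero, one_mul, FreeMonoid.length_mul, length_pow,
        FreeMonoid.length_of, Nat.sub_zero, mul_one] at hz
      exact NeZero.ne r (by omega)
    · set N : Fin r → Matrix (Fin n) (Fin n) S :=
        fun t => μ (FreeMonoid.map (fun i => t + i) w) with hN
      have hN0 : N 0 = 0 := by
        rw [hN]
        have : (fun i : Fin r => (0 : Fin r) + i) = id := funext fun i => zero_add i
        simp only [this, FreeMonoid.map_id, MonoidHom.id_apply]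
        exact hμ
      have hvje : ∀ j < r, secondEmb μ (vj j) = diagBlk fun t => N (t + (j : Fin r)) := by
        intro j hj
        rw [hvj]
        simp only
        rw [_root_.map_mul, _root_.map_mul, _root_.map_pow, _root_.map_pow, secondEmb_of_zero, hu, secondEmb_enc,
          ← hN, cyc_pow_mul_diagBlk, mul_assoc, ← pow_add,
          Nat.add_sub_cancel' (le_of_lt hj), cyc_pow_r, mul_one]
      rw [map_list_prod, List.map_map]
      have h1 : (List.range r).map (secondEmb μ ∘ vj)
          = ((List.range r).map (fun j : ℕ => fun t : Fin r => N (t + (j : Fin r)))).map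
              diagBlk := by
        rw [List.map_map]
        refine List.map_congr_left fun j hj => ?_
        exact hvje j (List.mem_range.1 hj)
      rw [h1, diagBlk_list_prod]
      have h2 : (fun t : Fin r =>
          (((List.range r).map (fun j : ℕ => fun t : Fin r => N (t + (j : Fin r)))).map
            (fun A => A t)).prod) = fun _ => (0 : Matrix (Fin n) (Fin n) S) := by
        funext t
        apply List.prod_eq_zero
        rw [List.map_map]
        refine List.mem_map.2 ⟨((-t : Fin r) : ℕ), List.mem_range.2 (-t).isLt, ?_⟩
        simp only [Function.comp]
        rw [Fin.cast_val_eq_self, add_neg_cancel, hN0]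
      rw [h2, diagBlk_zero]
  · rintro ⟨v, hv1, hv0⟩
    rcases subsingleton_or_nontrivial S with hS | hS
    · exact ⟨FreeMonoid.of 0, FreeMonoid.of_ne_one _,
        Matrix.ext fun a b => Subsingleton.elim _ _⟩
    · obtain ⟨k, ψ, hlen, hv⟩ := decomp μ v
      rw [hv0] at hv
      have hD : diagBlk (fun t => μ (ψ t)) = 0 := by
        have h := congrArg (· * (cycShift S r n) ^ (k * (r - 1))) hv.symm
        simp only [zero_mul] at h
        rw [mul_assoc, ← pow_add] at h
        have hk : k + k * (r - 1) = r * k := by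
          obtain ⟨m, rfl⟩ : ∃ m, r = m + 1 :=
            ⟨r - 1, (Nat.succ_pred_eq_of_pos (Nat.pos_of_ne_zero (NeZero.ne r))).symm⟩
          simp [Nat.succ_mul, Nat.mul_succ, Nat.succ_sub_one]
          ring
        rw [hk, pow_mul, cyc_pow_r, one_pow, mul_one] at h
        exact h
      rcases Nat.eq_zero_or_pos (v.toList.count 1) with hc | hc
      · exfalso
        have hψ : (fun t : Fin r => μ (ψ t))
            = fun _ : Fin r => (1 : Matrix (Fin n) (Fin n) S) := by
          funext t
          rw [FreeMonoid.length_eq_zero.1 ((hlen t).trans hc), _root_.map_one]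
        rw [hψ, diagBlk_one] at hD
        have h00 : (1 : Matrix (Fin r × Fin n) (Fin r × Fin n) S)
            ((0 : Fin r), (0 : Fin n)) ((0 : Fin r), (0 : Fin n))
            = (0 : Matrix (Fin r × Fin n) (Fin r × Fin n) S)
              ((0 : Fin r), (0 : Fin n)) ((0 : Fin r), (0 : Fin n)) := by rw [hD]
        simp [Matrix.one_apply] at h00
      · refine ⟨ψ 0, ?_, ?_⟩
        · intro h1
          have := hlen 0
          rw [h1] at this
          simp only [FreeMonoid.length_one] at this
          omega
        · ext a b
          have h0 : diagBlk (fun t => μ (ψ t)) ((0 : Fin r), a) ((0 : Fin r), b)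
              = (0 : Matrix (Fin r × Fin n) (Fin r × Fin n) S) ((0 : Fin r), a)
                ((0 : Fin r), b) := by rw [hD]
          simpa [diagBlk] using h0
end

section
/- Let S be a semiring, μ : Σ_r^* → S^{n×n} a monoid morphism, α ∈ S^{1×n}, β ∈ S^{n×1}, γ ∈ S with γ ≠ 0, and n ≥ 1. Define μ' : Σ_{r+1}^* → S^{(n+2)×(n+2)} with μ'(a_i) = [0, αμ(a_i), αμ(a_i)β; 0, μ(a_i), μ(a_i)β; 0, 0, 0] for 1 ≤ i ≤ r, and μ'(a_{r+1}) = [1, 0, 0; 0, 0_{n×n}, 0; 0, 0, 1] (blocks of sizes 1, n, 1). Let M_γ be the matrix whose only nonzero entry is γ in position (1, n+2). Then there exists w ∈ Σ_r^+ with α μ(w) β = γ if and only if there exists z ∈ Σ_{r+1}^+ with μ'(z) = M_γ. -/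
open Matrix

/-- The `(n+2)×(n+2)` block matrix `[0, αX, αXβ; 0, X, Xβ; 0, 0, 0]`. -/
def cornerBlk {S : Type*} [Semiring S] {n : ℕ}
    (α : Matrix (Fin 1) (Fin n) S) (β : Matrix (Fin n) (Fin 1) S)
    (X : Matrix (Fin n) (Fin n) S) :
    Matrix ((Fin 1 ⊕ Fin n) ⊕ Fin 1) ((Fin 1 ⊕ Fin n) ⊕ Fin 1) S :=
  Matrix.fromBlocks (Matrix.fromBlocks 0 (α * X) 0 X)
    (Matrix.fromRows (α * X * β) (X * β)) 0 0

/-- Generator images for the reduction of scalar reachability to matrix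
reachability: letters `a_i` (`1 ≤ i ≤ r`) go to
`[0, αμ(a_i), αμ(a_i)β; 0, μ(a_i), μ(a_i)β; 0, 0, 0]` and the extra letter
`a_{r+1}` (here `Fin.last r`) to `diag(1, 0_{n×n}, 1)`. -/
def scalToMatGen {S : Type*} [Semiring S] {r n : ℕ}
    (μ : FreeMonoid (Fin r) →* Matrix (Fin n) (Fin n) S)
    (α : Matrix (Fin 1) (Fin n) S) (β : Matrix (Fin n) (Fin 1) S) :
    Fin (r + 1) → Matrix ((Fin 1 ⊕ Fin n) ⊕ Fin 1) ((Fin 1 ⊕ Fin n) ⊕ Fin 1) S := fun i =>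
  Fin.lastCases (Matrix.fromBlocks (Matrix.fromBlocks 1 0 0 0) 0 0 1)
    (fun j => cornerBlk α β (μ (FreeMonoid.of j))) i

/-- The matrix `M_γ` whose only (possibly) nonzero entry is `γ` in the top-right
corner (position `(1, n+2)`). -/
def cornerTarget {S : Type*} [Semiring S] (n : ℕ) (γ : S) :
    Matrix ((Fin 1 ⊕ Fin n) ⊕ Fin 1) ((Fin 1 ⊕ Fin n) ⊕ Fin 1) S :=
  Matrix.of fun i j =>
    if i = Sum.inl (Sum.inl 0) ∧ j = Sum.inr 0 then γ else 0

section Aux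

variable {S : Type*} [Semiring S] {r n : ℕ}

/-- Block upper triangular matrix `[a, p, s; 0, X, q; 0, 0, d]`. -/
def Tri (a : Matrix (Fin 1) (Fin 1) S) (p : Matrix (Fin 1) (Fin n) S)
    (X : Matrix (Fin n) (Fin n) S) (q : Matrix (Fin n) (Fin 1) S)
    (s : Matrix (Fin 1) (Fin 1) S) (d : Matrix (Fin 1) (Fin 1) S) :
    Matrix ((Fin 1 ⊕ Fin n) ⊕ Fin 1) ((Fin 1 ⊕ Fin n) ⊕ Fin 1) S :=
  Matrix.fromBlocks (Matrix.fromBlocks a p 0 X) (Matrix.fromRows s q) 0 d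

lemma fromRows_add {m₁ m₂ k : Type*} (A C : Matrix m₁ k S) (B D : Matrix m₂ k S) :
    Matrix.fromRows A B + Matrix.fromRows C D = Matrix.fromRows (A + C) (B + D) := by
  ext (i | i) j <;> simp [Matrix.fromRows_apply_inl, Matrix.fromRows_apply_inr]

lemma Tri_mul (a : Matrix (Fin 1) (Fin 1) S) (p : Matrix (Fin 1) (Fin n) S)
    (X : Matrix (Fin n) (Fin n) S) (q : Matrix (Fin n) (Fin 1) S)
    (s d a' : Matrix (Fin 1) (Fin 1) S) (p' : Matrix (Fin 1) (Fin n) S)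
    (X' : Matrix (Fin n) (Fin n) S) (q' : Matrix (Fin n) (Fin 1) S)
    (s' d' : Matrix (Fin 1) (Fin 1) S) :
    Tri a p X q s d * Tri a' p' X' q' s' d' =
      Tri (a * a') (a * p' + p * X') (X * X') (X * q' + q * d')
        (a * s' + p * q' + s * d') (d * d') := by
  simp only [Tri, Matrix.fromBlocks_multiply, Matrix.fromBlocks_mul_fromRows,
    Matrix.fromRows_mul, fromRows_add, Matrix.zero_mul, Matrix.mul_zero,
    add_zero, zero_add]

lemma Tri_corner (a : Matrix (Fin 1) (Fin 1) S) (p : Matrix (Fin 1) (Fin n) S)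
    (X : Matrix (Fin n) (Fin n) S) (q : Matrix (Fin n) (Fin 1) S)
    (s d : Matrix (Fin 1) (Fin 1) S) :
    Tri a p X q s d (Sum.inl (Sum.inl 0)) (Sum.inr 0) = s 0 0 := rfl

lemma Tri_zero : (Tri 0 0 0 0 0 0 : Matrix ((Fin 1 ⊕ Fin n) ⊕ Fin 1) _ S) = 0 := by
  simp [Tri]

lemma Tri_corner_target (s : Matrix (Fin 1) (Fin 1) S) :
    (Tri 0 0 0 0 s 0 : Matrix _ _ S) = cornerTarget n (s 0 0) := by
  ext i j
  obtain (i | i) | i := i <;> obtain (j | j) | j := j <;>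
    simp_all [Tri, cornerTarget, Matrix.fromBlocks, Matrix.fromRows_apply_inl, Matrix.fromRows_apply_inr, Fin.eq_zero]

lemma gen_last (μ : FreeMonoid (Fin r) →* Matrix (Fin n) (Fin n) S)
    (α : Matrix (Fin 1) (Fin n) S) (β : Matrix (Fin n) (Fin 1) S) :
    scalToMatGen μ α β (Fin.last r) = Tri 1 0 0 0 0 1 := by
  simp [scalToMatGen, Tri]

lemma gen_castSucc (μ : FreeMonoid (Fin r) →* Matrix (Fin n) (Fin n) S)
    (α : Matrix (Fin 1) (Fin n) S) (β : Matrix (Fin n) (Fin 1) S) (j : Fin r) :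
    scalToMatGen μ α β j.castSucc =
      Tri 0 (α * μ (.of j)) (μ (.of j)) (μ (.of j) * β) (α * μ (.of j) * β) 0 := by
  simp only [scalToMatGen, Fin.lastCases_castSucc]
  rfl

/-- Invariant: the possible values of `μ'(z)` for nonempty `z`. -/
def Good (μ : FreeMonoid (Fin r) →* Matrix (Fin n) (Fin n) S)
    (α : Matrix (Fin 1) (Fin n) S) (β : Matrix (Fin n) (Fin 1) S)
    (M : Matrix ((Fin 1 ⊕ Fin n) ⊕ Fin 1) ((Fin 1 ⊕ Fin n) ⊕ Fin 1) S) : Prop :=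
  M = Tri 1 0 0 0 0 1 ∨ M = 0 ∨
    ∃ w : FreeMonoid (Fin r), w ≠ 1 ∧
      (M = Tri 0 (α * μ w) (μ w) (μ w * β) (α * μ w * β) 0 ∨
       M = Tri 0 (α * μ w) 0 0 (α * μ w * β) 0 ∨
       M = Tri 0 0 0 (μ w * β) (α * μ w * β) 0 ∨
       M = Tri 0 0 0 0 (α * μ w * β) 0)

lemma Good.mul_gen {μ : FreeMonoid (Fin r) →* Matrix (Fin n) (Fin n) S}
    {α : Matrix (Fin 1) (Fin n) S} {β : Matrix (Fin n) (Fin 1) S}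
    {M : Matrix ((Fin 1 ⊕ Fin n) ⊕ Fin 1) ((Fin 1 ⊕ Fin n) ⊕ Fin 1) S}
    (h : Good μ α β M) (i : Fin (r + 1)) :
    Good μ α β (scalToMatGen μ α β i * M) := by
  induction i using Fin.lastCases with
  | last =>
    rw [gen_last]
    rcases h with h | h | ⟨w, hw, h | h | h | h⟩ <;> subst h
    · exact Or.inl (by rw [Tri_mul]; simp)
    · exact Or.inr (Or.inl (mul_zero _))
    · exact Or.inr (Or.inr ⟨w, hw, Or.inr (Or.inl (by rw [Tri_mul]; simp))⟩)
    · exact Or.inr (Or.inr ⟨w, hw, Or.inr (Or.inl (by rw [Tri_mul]; simp))⟩)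
    · exact Or.inr (Or.inr ⟨w, hw, Or.inr (Or.inr (Or.inr (by rw [Tri_mul]; simp)))⟩)
    · exact Or.inr (Or.inr ⟨w, hw, Or.inr (Or.inr (Or.inr (by rw [Tri_mul]; simp)))⟩)
  | cast j =>
    rw [gen_castSucc]
    rcases h with h | h | ⟨w, hw, h | h | h | h⟩ <;> subst h
    · exact Or.inr (Or.inr ⟨.of j, FreeMonoid.of_ne_one j,
        Or.inr (Or.inr (Or.inl (by rw [Tri_mul]; simp)))⟩)
    · exact Or.inr (Or.inl (mul_zero _))
    · refine Or.inr (Or.inr ⟨FreeMonoid.of j * w, ?_, Or.inl ?_⟩)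
      · intro hc
        have := congrArg FreeMonoid.toList hc
        simp at this
      · rw [Tri_mul]
        simp [_root_.map_mul, Matrix.mul_assoc]
    · exact Or.inr (Or.inl (by rw [Tri_mul, Tri_zero.symm]; simp))
    · refine Or.inr (Or.inr ⟨FreeMonoid.of j * w, ?_, Or.inr (Or.inr (Or.inl ?_))⟩)
      · intro hc
        have := congrArg FreeMonoid.toList hc
        simp at this
      · rw [Tri_mul]
        simp [_root_.map_mul, Matrix.mul_assoc]
    · exact Or.inr (Or.inl (by rw [Tri_mul, Tri_zero.symm]; simp))

lemma good_lift (μ : FreeMonoid (Fin r) →* Matrix (Fin n) (Fin n) S)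
    (α : Matrix (Fin 1) (Fin n) S) (β : Matrix (Fin n) (Fin 1) S) :
    ∀ l : List (Fin (r + 1)), l ≠ [] →
      Good μ α β (FreeMonoid.lift (scalToMatGen μ α β) (FreeMonoid.ofList l))
  | [], h => absurd rfl h
  | [i], _ => by
    rw [FreeMonoid.ofList_singleton, FreeMonoid.lift_eval_of]
    induction i using Fin.lastCases with
    | last => exact Or.inl (gen_last μ α β)
    | cast j =>
      exact Or.inr (Or.inr ⟨.of j, FreeMonoid.of_ne_one j, Or.inl (gen_castSucc μ α β j)⟩)
  | i :: a :: t, _ => by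
    have hrec := good_lift μ α β (a :: t) (by simp)
    rw [FreeMonoid.ofList_cons, _root_.map_mul, FreeMonoid.lift_eval_of]
    exact hrec.mul_gen i

lemma lift_map_castSucc (μ : FreeMonoid (Fin r) →* Matrix (Fin n) (Fin n) S)
    (α : Matrix (Fin 1) (Fin n) S) (β : Matrix (Fin n) (Fin 1) S) :
    ∀ l : List (Fin r), l ≠ [] →
      FreeMonoid.lift (scalToMatGen μ α β)
          (FreeMonoid.map Fin.castSucc (FreeMonoid.ofList l)) =
        Tri 0 (α * μ (FreeMonoid.ofList l)) (μ (FreeMonoid.ofList l))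
          (μ (FreeMonoid.ofList l) * β) (α * μ (FreeMonoid.ofList l) * β) 0
  | [], h => absurd rfl h
  | [j], _ => by
    rw [FreeMonoid.ofList_singleton, FreeMonoid.map_of, FreeMonoid.lift_eval_of]
    exact gen_castSucc μ α β j
  | j :: a :: t, _ => by
    have hrec := lift_map_castSucc μ α β (a :: t) (by simp)
    rw [FreeMonoid.ofList_cons, _root_.map_mul, _root_.map_mul, FreeMonoid.map_of,
      FreeMonoid.lift_eval_of, hrec, gen_castSucc, Tri_mul]
    simp [_root_.map_mul, Matrix.mul_assoc]

end Aux

/-- Equivalence (4.28): for `γ ≠ 0` and `n ≥ 1`,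
`∃ w ∈ Σ_r^+, αμ(w)β = γ` iff `∃ z ∈ Σ_{r+1}^+, μ'(z) = M_γ`. -/
theorem scalar_to_matrix {S : Type*} [Semiring S] {r n : ℕ} (hn : 1 ≤ n)
    (μ : FreeMonoid (Fin r) →* Matrix (Fin n) (Fin n) S)
    (α : Matrix (Fin 1) (Fin n) S) (β : Matrix (Fin n) (Fin 1) S)
    (γ : S) (hγ : γ ≠ 0) :
    (∃ w : FreeMonoid (Fin r), w ≠ 1 ∧ (α * μ w * β) 0 0 = γ) ↔
    (∃ z : FreeMonoid (Fin (r + 1)), z ≠ 1 ∧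
      FreeMonoid.lift (scalToMatGen μ α β) z = cornerTarget n γ) := by
  constructor
  · rintro ⟨w, hw, hval⟩
    refine ⟨FreeMonoid.of (Fin.last r) * FreeMonoid.map Fin.castSucc w *
        FreeMonoid.of (Fin.last r), ?_, ?_⟩
    · intro h
      have := congrArg FreeMonoid.toList h
      simp at this
    · have hlist : w.toList ≠ [] := by
        intro h
        exact hw (by rw [← FreeMonoid.ofList_toList w, h]; rfl)
      have hC := lift_map_castSucc μ α β w.toList hlist
      rw [FreeMonoid.ofList_toList] at hC
      rw [_root_.map_mul, _root_.map_mul, FreeMonoid.lift_eval_of,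
        gen_last, hC, Tri_mul, Tri_mul]
      simp only [Matrix.mul_zero, Matrix.zero_mul, Matrix.mul_one, Matrix.one_mul,
        add_zero, zero_add, mul_zero, zero_mul]
      rw [Tri_corner_target, hval]
  · rintro ⟨z, hz, hzeq⟩
    have hlist : z.toList ≠ [] := by
      intro h
      exact hz (by rw [← FreeMonoid.ofList_toList z, h]; rfl)
    have hg := good_lift μ α β z.toList hlist
    rw [FreeMonoid.ofList_toList, hzeq] at hg
    have hcorner : cornerTarget n γ (Sum.inl (Sum.inl 0)) (Sum.inr 0) = γ := by
      simp [cornerTarget]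
    rcases hg with h | h | ⟨w, hw, h | h | h | h⟩
    · have := congrFun (congrFun h.symm (Sum.inl (Sum.inl 0))) (Sum.inr 0)
      rw [hcorner, Tri_corner] at this
      simp at this
      exact absurd this.symm hγ
    · have := congrFun (congrFun h.symm (Sum.inl (Sum.inl 0))) (Sum.inr 0)
      rw [hcorner] at this
      simp at this
      exact absurd this.symm hγ
    all_goals {
      have := congrFun (congrFun h.symm (Sum.inl (Sum.inl 0))) (Sum.inr 0)
      rw [hcorner, Tri_corner] at this
      exact ⟨w, hw, this⟩
    }
end
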